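/- For n = 2, k = 1, let 𝔢 = ∑_{j=1}^N id^{⊗(j−1)} ⊗ e_{2,1} ⊗ d^{⊗(N−j)} and 𝔣 = ∑_{j=1}^N d^{⊗(j−1)} ⊗ e_{1,2} ⊗ id^{⊗(N−j)} on (ℂ²)^{⊗N}, where d = id − 2e_{2,2}. Then 𝔢ᵀ = 𝔥 𝔣 where 𝔥 = d^{⊗N}, and consequently for vectors a, b ∈ (ℂ²)^{⊗N} with real entries, ⟨𝔢 a, b⟩ = ⟨a, 𝔥𝔣 b⟩ in the standard inner product. -/

import Mathlib

open Matrix BigOperators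

noncomputable section

def E2 (x y : Fin 2) : Matrix (Fin 2) (Fin 2) ℂ := Matrix.single x y 1

/-- `d = id − 2 e_{2,2}` (`0`-indexed: `e_{2,2}` is `E2 1 1`). -/
def dmat : Matrix (Fin 2) (Fin 2) ℂ := 1 - (2 : ℂ) • E2 1 1

def kronN (N : ℕ) (A : Fin N → Matrix (Fin 2) (Fin 2) ℂ) :
    Matrix (Fin N → Fin 2) (Fin N → Fin 2) ℂ :=
  Matrix.of fun f g => ∏ i : Fin N, A i (f i) (g i)

/-- `𝔢 = ∑_{j=1}^N id^{⊗(j−1)} ⊗ e_{2,1} ⊗ d^{⊗(N−j)}`. -/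
def eOp (N : ℕ) : Matrix (Fin N → Fin 2) (Fin N → Fin 2) ℂ :=
  ∑ j : Fin N, kronN N (fun i => if i < j then 1 else if i = j then E2 1 0 else dmat)

/-- `𝔣 = ∑_{j=1}^N d^{⊗(j−1)} ⊗ e_{1,2} ⊗ id^{⊗(N−j)}`. -/
def fOp (N : ℕ) : Matrix (Fin N → Fin 2) (Fin N → Fin 2) ℂ :=
  ∑ j : Fin N, kronN N (fun i => if i < j then dmat else if i = j then E2 0 1 else 1)

/-- `𝔥 = d^{⊗N}`. -/
def hOp (N : ℕ) : Matrix (Fin N → Fin 2) (Fin N → Fin 2) ℂ := kronN N (fun _ => dmat)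

lemma dmat_offdiag (x y : Fin 2) (h : y ≠ x) : dmat x y = 0 := by
  fin_cases x <;> fin_cases y <;> simp_all [dmat, E2, Matrix.one_apply, Matrix.single]

lemma key_lt (x y : Fin 2) : (1 : Matrix (Fin 2) (Fin 2) ℂ) y x = dmat x x * dmat x y := by
  fin_cases x <;> fin_cases y <;>
    norm_num [dmat, E2, Matrix.one_apply, Matrix.single]

lemma key_eq (x y : Fin 2) : E2 1 0 y x = dmat x x * E2 0 1 x y := by
  fin_cases x <;> fin_cases y <;>
    norm_num [dmat, E2, Matrix.one_apply, Matrix.single]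

lemma key_gt (x y : Fin 2) : dmat y x = dmat x x * (1 : Matrix (Fin 2) (Fin 2) ℂ) x y := by
  fin_cases x <;> fin_cases y <;>
    norm_num [dmat, E2, Matrix.one_apply, Matrix.single]

lemma hOp_apply (N : ℕ) (f g : Fin N → Fin 2) :
    hOp N f g = if g = f then ∏ i : Fin N, dmat (f i) (f i) else 0 := by
  by_cases h : g = f
  · simp [h, hOp, kronN]
  · simp only [h, if_false, hOp, kronN, Matrix.of_apply]
    obtain ⟨i, hi⟩ : ∃ i, g i ≠ f i := by
      by_contra hc
      push_neg at hc
      exact h (funext hc)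
    exact Finset.prod_eq_zero (Finset.mem_univ i) (dmat_offdiag _ _ hi)

theorem stmt16 (N : ℕ) :
    (eOp N)ᵀ = hOp N * fOp N
    ∧ ∀ a b : (Fin N → Fin 2) → ℂ,
        (∀ i, (a i).im = 0) → (∀ i, (b i).im = 0) →
        dotProduct ((eOp N).mulVec a) b = dotProduct a ((hOp N * fOp N).mulVec b) := by
  have h1 : (eOp N)ᵀ = hOp N * fOp N := by
    ext f g
    rw [Matrix.transpose_apply, Matrix.mul_apply]
    rw [Finset.sum_eq_single f]
    · rw [hOp_apply, if_pos rfl]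
      simp only [eOp, fOp, kronN, Matrix.sum_apply, Matrix.of_apply, Finset.mul_sum]
      refine Finset.sum_congr rfl fun j _ => ?_
      rw [← Finset.prod_mul_distrib]
      refine Finset.prod_congr rfl fun i _ => ?_
      by_cases hij : i < j
      · simp only [if_pos hij]; exact key_lt _ _
      · simp only [if_neg hij]
        by_cases he : i = j
        · simp only [if_pos he]; exact key_eq _ _
        · simp only [if_neg he]; exact key_gt _ _
    · intro x _ hx
      rw [hOp_apply, if_neg hx, zero_mul]
    · intro h; exact absurd (Finset.mem_univ f) h
  refine ⟨h1, fun a b _ _ => ?_⟩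
  rw [← h1, dotProduct_comm, Matrix.dotProduct_mulVec, dotProduct_comm,
    Matrix.mulVec_transpose]
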